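/- Let K satisfy |K(x,y)| ≤ C/(1+‖x−y‖₁)^α, let η ∈ (0, 2/n), γ ∈ ℝⁿ, and define φ_γ(x) = η^{−n/p} ∫_{[−η/2,η/2]ⁿ} K(γ+z, x) dz. Then for all x ∈ ℝⁿ, |φ_γ(x)| ≤ η^{n/p'} · C / (1 − nη/2 + ‖γ−x‖₁)^α. -/

import Mathlib

open MeasureTheory

theorem stmt5 (n : ℕ) (hn : 0 < n) (p p' C α η : ℝ) (hp : 1 ≤ p)
    (hpp' : 1 / p + 1 / p' = 1) (hC : 0 < C) (hα : 0 < α)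
    (hη : 0 < η) (hη2 : η < 2 / n)
    (K : (Fin n → ℝ) → (Fin n → ℝ) → ℝ)
    (hKmeas : Measurable (Function.uncurry K))
    (hK : ∀ x y, |K x y| ≤ C / (1 + ∑ i, |x i - y i|) ^ α)
    (γ x : Fin n → ℝ) :
    |η ^ (-(n / p)) *
        ∫ z in Set.Icc (fun _ => -(η / 2)) (fun _ => η / 2 : Fin n → ℝ), K (γ + z) x| ≤
      η ^ ((n : ℝ) / p') * C / (1 - n * η / 2 + ∑ i, |γ i - x i|) ^ α := by
  set s : Set (Fin n → ℝ) := Set.Icc (fun _ => -(η / 2)) (fun _ => η / 2) with hs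
  have hS0 : 0 ≤ ∑ i, |γ i - x i| := Finset.sum_nonneg fun i _ => abs_nonneg _
  have hnη : (n : ℝ) * η < 2 := by
    have h := (lt_div_iff₀ (by exact_mod_cast hn : (0:ℝ) < n)).mp hη2
    linarith [h]
  have hD : 0 < 1 - n * η / 2 + ∑ i, |γ i - x i| := by linarith
  set D := 1 - n * η / 2 + ∑ i, |γ i - x i| with hDdef
  have hbound : ∀ z ∈ s, ‖K (γ + z) x‖ ≤ C / D ^ α := by
    intro z hz
    have hz1 : ∑ i, |z i| ≤ ↑n * η / 2 := by
      calc ∑ i, |z i| ≤ ∑ _i : Fin n, (η / 2) :=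
            Finset.sum_le_sum fun i _ => abs_le.mpr ⟨hz.1 i, hz.2 i⟩
        _ = n * η / 2 := by
            rw [Finset.sum_const, Finset.card_univ, Fintype.card_fin, nsmul_eq_mul]; ring
    have hT : D ≤ 1 + ∑ i, |(γ + z) i - x i| := by
      have hsum : ∑ i, |γ i - x i| ≤ ∑ i, |(γ + z) i - x i| + ∑ i, |z i| := by
        rw [← Finset.sum_add_distrib]
        refine Finset.sum_le_sum fun i _ => ?_
        have heq : γ i - x i = ((γ + z) i - x i) + (-(z i)) := by
          simp [Pi.add_apply]; ring
        calc |γ i - x i| = |((γ + z) i - x i) + (-(z i))| := by rw [heq]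
          _ ≤ |(γ + z) i - x i| + |(-(z i))| := abs_add_le _ _
          _ = |(γ + z) i - x i| + |z i| := by rw [abs_neg]
      rw [hDdef]; linarith
    calc ‖K (γ + z) x‖ = |K (γ + z) x| := rfl
      _ ≤ C / (1 + ∑ i, |(γ + z) i - x i|) ^ α := hK _ _
      _ ≤ C / D ^ α := by gcongr
  have hvol : volume s < ⊤ := isCompact_Icc.measure_lt_top
  have hmeas : AEStronglyMeasurable (fun z => K (γ + z) x) (volume.restrict s) := by
    exact ((hKmeas.comp ((measurable_const.add measurable_id).prodMk
      measurable_const)).aestronglyMeasurable).restrict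
  have hInt : ‖∫ z in s, K (γ + z) x‖ ≤ C / D ^ α * (volume s).toReal :=
    norm_setIntegral_le_of_norm_le_const hvol hbound
  have hab : (fun _ : Fin n => -(η / 2)) ≤ (fun _ => η / 2) := fun i => by linarith
  have hvtr : (volume s).toReal = η ^ n := by
    rw [hs, Real.volume_Icc_pi_toReal hab]
    have : (η / 2 - -(η / 2)) = η := by ring
    simp [this]
  have hexp : -((n : ℝ) / p) + n = (n : ℝ) / p' := by
    have h1 : 1 / p' = 1 - 1 / p := by linarith
    have h2 : (n : ℝ) / p' = n * (1 / p') := by ring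
    have h3 : (n : ℝ) / p = n * (1 / p) := by ring
    rw [h2, h1, h3]; ring
  have hpow : η ^ (-((n : ℝ) / p)) * η ^ n = η ^ ((n : ℝ) / p') := by
    rw [← Real.rpow_natCast η n, ← Real.rpow_add hη, hexp]
  have hpos : 0 < η ^ (-((n : ℝ) / p)) := Real.rpow_pos_of_pos hη _
  rw [abs_mul, abs_of_pos hpos]
  calc η ^ (-((n : ℝ) / p)) * |∫ z in s, K (γ + z) x|
      ≤ η ^ (-((n : ℝ) / p)) * (C / D ^ α * (volume s).toReal) := by
        exact mul_le_mul_of_nonneg_left (by simpa [Real.norm_eq_abs] using hInt) hpos.le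
    _ = η ^ ((n : ℝ) / p') * C / D ^ α := by
        rw [hvtr, show η ^ (-((n:ℝ)/p)) * (C / D ^ α * η ^ n) = η ^ (-((n:ℝ)/p)) * η ^ n * (C / D ^ α) by ring, hpow, mul_div_assoc]
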